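/- Let S be a finite generating subset of a group G, and suppose φ : H → G^r, h ↦ (φ_1(h),…,φ_r(h)), has image containing the diagonal, where H ≤ G. Then there exists a constant c > 0 such that for every g ∈ G there exists h ∈ H with φ_i(h) = g for every i and |h|_S ≤ c·|g|_S, where |·|_S denotes word length with respect to S in G. -/

import Mathlib

def wordLen {S : Type*} [DecidableEq S] (w : FreeGroup S) : ℕ := w.toWord.length

/-- The word length of `g ∈ G` with respect to the generating set `S`. -/
noncomputable def gLen {G : Type*} [Group G] [DecidableEq G] (S : Set G) (g : G) : ℕ :=
  sInf {n | ∃ w : FreeGroup S, FreeGroup.lift (fun s : S => (s : G)) w = g ∧ wordLen w = n}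

section aux

variable {G : Type*} [Group G] [DecidableEq G] (S : Set G)

lemma gLen_le {g : G} {w : FreeGroup S}
    (hw : FreeGroup.lift (fun s : S => (s : G)) w = g) : gLen S g ≤ wordLen w :=
  Nat.sInf_le ⟨w, hw, rfl⟩

lemma gLen_spec (hgen : Subgroup.closure S = ⊤) (g : G) :
    ∃ w : FreeGroup S, FreeGroup.lift (fun s : S => (s : G)) w = g ∧ wordLen w = gLen S g := by
  have hne : {n | ∃ w : FreeGroup S,
      FreeGroup.lift (fun s : S => (s : G)) w = g ∧ wordLen w = n}.Nonempty := by
    have : g ∈ (FreeGroup.lift (fun s : S => (s : G))).range := by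
      rw [FreeGroup.range_lift_eq_closure, Subtype.range_coe, hgen]
      trivial
    obtain ⟨w, hw⟩ := this
    exact ⟨wordLen w, w, hw, rfl⟩
  exact Nat.sInf_mem hne

lemma gLen_mul (hgen : Subgroup.closure S = ⊤) (a b : G) :
    gLen S (a * b) ≤ gLen S a + gLen S b := by
  obtain ⟨wa, hwa, hla⟩ := gLen_spec S hgen a
  obtain ⟨wb, hwb, hlb⟩ := gLen_spec S hgen b
  have h1 : FreeGroup.lift (fun s : S => (s : G)) (wa * wb) = a * b := by
    rw [map_mul, hwa, hwb]
  calc gLen S (a * b) ≤ wordLen (wa * wb) := gLen_le S h1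
    _ ≤ wordLen wa + wordLen wb := by
        have := (FreeGroup.toWord_mul_sublist wa wb).length_le
        simpa [wordLen] using this
    _ = gLen S a + gLen S b := by rw [hla, hlb]

lemma gLen_one : gLen S (1 : G) = 0 := by
  have : gLen S (1 : G) ≤ wordLen (1 : FreeGroup S) :=
    gLen_le S (map_one _)
  simpa [wordLen, FreeGroup.toWord_one] using this

lemma gLen_prod_le (hgen : Subgroup.closure S = ⊤) (N : ℕ) (L : List G)
    (hL : ∀ x ∈ L, gLen S x ≤ N) : gLen S L.prod ≤ L.length * N := by
  induction L with
  | nil => simpa using (gLen_one S).le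
  | cons a L ih =>
      have h1 : gLen S (a * L.prod) ≤ gLen S a + gLen S L.prod := gLen_mul S hgen a L.prod
      have h2 : gLen S L.prod ≤ L.length * N := ih fun x hx => hL x (List.mem_cons_of_mem _ hx)
      have h3 : gLen S a ≤ N := hL a (List.mem_cons_self)
      simp only [List.prod_cons, List.length_cons]
      calc gLen S (a * L.prod) ≤ gLen S a + gLen S L.prod := h1
        _ ≤ N + L.length * N := Nat.add_le_add h3 h2
        _ = (L.length + 1) * N := by ring

end aux

theorem diagonal_lift_length_control {G : Type*} [Group G] [DecidableEq G]
    (S : Set G) (hSfin : S.Finite) (hgen : Subgroup.closure S = ⊤)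
    (H : Subgroup G) (r : ℕ) (φ : Fin r → (H →* G))
    (hdiag : ∀ g : G, ∃ h : H, ∀ i : Fin r, φ i h = g) :
    ∃ c : ℝ, 0 < c ∧ ∀ g : G, ∃ h : H,
      (∀ i : Fin r, φ i h = g) ∧ (gLen S (h : G) : ℝ) ≤ c * gLen S g := by
  classical
  -- choice of diagonal lifts
  choose f hf using hdiag
  -- bound on lengths of generators' lifts
  set N : ℕ := hSfin.toFinset.sup (fun s => max (gLen S ((f s : G))) (gLen S ((f s : G)⁻¹))) with hN
  refine ⟨(N : ℝ) + 1, by positivity, fun g => ?_⟩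
  obtain ⟨w, hw, hlw⟩ := gLen_spec S hgen g
  -- map each letter to an element of H
  set d : S × Bool → H := fun x => cond x.2 (f (x.1 : G)) (f (x.1 : G))⁻¹ with hd
  refine ⟨(w.toWord.map d).prod, ?_, ?_⟩
  · intro i
    have : φ i (w.toWord.map d).prod
        = (w.toWord.map (fun x => cond x.2 ((x.1 : G)) ((x.1 : G))⁻¹)).prod := by
      rw [map_list_prod, List.map_map]
      congr 1
      apply List.map_congr_left
      intro x _
      rcases x with ⟨s, b⟩
      cases b <;> simp [hd, hf]
    rw [this]
    have := FreeGroup.lift_mk (f := fun s : S => (s : G)) (L := w.toWord)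
    rw [FreeGroup.mk_toWord] at this
    rw [← hw, this]
  · -- length bound
    have hcoe : ((w.toWord.map d).prod : G) = (w.toWord.map (fun x => ((d x : G)))).prod := by
      have h := map_list_prod H.subtype (w.toWord.map d)
      rw [List.map_map] at h
      exact h
    have hbound : ∀ x ∈ w.toWord.map (fun x => ((d x : G))), gLen S x ≤ N := by
      intro x hx
      obtain ⟨⟨s, b⟩, hmem, rfl⟩ := List.mem_map.1 hx
      have hsS : (s : G) ∈ hSfin.toFinset := by simp [hSfin.mem_toFinset]
      have hsup := Finset.le_sup (f := fun s => max (gLen S ((f s : G))) (gLen S ((f s : G)⁻¹))) hsS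
      cases b
      · exact le_trans (by simp [hd]) (le_trans (le_max_right _ _) hsup)
      · exact le_trans (by simp [hd]) (le_trans (le_max_left _ _) hsup)
    have hlen : gLen S ((w.toWord.map d).prod : G) ≤ w.toWord.length * N := by
      rw [hcoe]
      have := gLen_prod_le S hgen N (w.toWord.map (fun x => ((d x : G)))) hbound
      simpa using this
    have hlw' : w.toWord.length = gLen S g := hlw
    have : (gLen S ((w.toWord.map d).prod : G) : ℝ) ≤ (gLen S g : ℝ) * N := by
      have := hlen
      rw [hlw'] at this
      exact_mod_cast this
    calc (gLen S ((w.toWord.map d).prod : G) : ℝ) ≤ (gLen S g : ℝ) * N := this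
      _ ≤ ((N : ℝ) + 1) * gLen S g := by nlinarith [Nat.cast_nonneg (α := ℝ) (gLen S g), Nat.cast_nonneg (α := ℝ) N]
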